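/- Let X be a real Banach space and F ⊆ X** a finite-dimensional subspace whose pre-annihilator F₀ ⊆ X* is weak-star closed, and set V = (F₀)₀ ⊆ X. Then λ(F, X**) ≤ λ(V, X); more precisely, for every closed subspace U ⊆ X with X = V ⊕ U, the norm of the projection of X onto V along U equals the norm of a projection of X** onto F, whence every projection of X onto V gives rise to a projection of X** onto F of the same norm. -/

import Mathlib

open NormedSpace

noncomputable section

/-- Helper instance (as `NormedSpace.Dual` had in the older Mathlib) so that instances on the
bidual are found through the norm structure. -/
instance strongDualSeminormedAddCommGroupReal {E : Type*} [SeminormedAddCommGroup E]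
    [NormedSpace ℝ E] : SeminormedAddCommGroup (StrongDual ℝ E) := inferInstance

/-- Helper instance (as `NormedSpace.Dual` had in the older Mathlib). -/
instance strongDualNormedSpaceReal {E : Type*} [SeminormedAddCommGroup E]
    [NormedSpace ℝ E] : NormedSpace ℝ (StrongDual ℝ E) := inferInstance

/-- The annihilator of a subspace `W ⊆ E` in the continuous dual `E*`. -/
def ann {E : Type*} [NormedAddCommGroup E] [NormedSpace ℝ E]
    (W : Submodule ℝ E) : Submodule ℝ (StrongDual ℝ E) where
  carrier := {ℓ | ∀ w ∈ W, ℓ w = 0}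
  add_mem' := by
    intro a b ha hb w hw
    simp [ha w hw, hb w hw]
  zero_mem' := by
    intro w hw
    simp
  smul_mem' := by
    intro c ℓ hℓ w hw
    simp [hℓ w hw]

/-- The pre-annihilator of a subspace `H ⊆ E*` in `E`. -/
def preAnn {E : Type*} [NormedAddCommGroup E] [NormedSpace ℝ E]
    (H : Submodule ℝ (StrongDual ℝ E)) : Submodule ℝ E where
  carrier := {x | ∀ ℓ ∈ H, ℓ x = 0}
  add_mem' := by
    intro a b ha hb ℓ hℓ
    simp [ha ℓ hℓ, hb ℓ hℓ]
  zero_mem' := by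
    intro ℓ hℓ
    simp
  smul_mem' := by
    intro c x hx ℓ hℓ
    simp [hx ℓ hℓ]

/-- A subspace of the continuous dual is weak-star closed if its image in `WeakDual ℝ E`
(the dual with the topology of pointwise convergence on `E`) is closed. -/
def IsWeakStarClosed {E : Type*} [NormedAddCommGroup E] [NormedSpace ℝ E]
    (H : Submodule ℝ (StrongDual ℝ E)) : Prop :=
  IsClosed (StrongDual.toWeakDual '' (H : Set (StrongDual ℝ E)))

/-- The relative projection constant of a subspace `W` of a normed space `Y`:
the infimum of the operator norms of continuous linear projections of `Y` onto `W`. -/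
def relProjConst {Y : Type*} [NormedAddCommGroup Y] [NormedSpace ℝ Y]
    (W : Submodule ℝ Y) : ℝ :=
  sInf {c | ∃ P : Y →L[ℝ] Y, P.comp P = P ∧ LinearMap.range (P : Y →ₗ[ℝ] Y) = W ∧ ‖P‖ = c}

end

set_option maxHeartbeats 2000000
set_option synthInstance.maxHeartbeats 800000

section Aux

variable {X : Type*} [NormedAddCommGroup X] [NormedSpace ℝ X]

lemma mem_preAnn' {H : Submodule ℝ (StrongDual ℝ X)} {x : X} :
    x ∈ preAnn H ↔ ∀ ℓ ∈ H, ℓ x = 0 := Iff.rfl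

/-- Every continuous linear functional on the weak-star dual is evaluation at a point. -/
lemma exists_eval_of_continuous (φ : WeakDual ℝ X →L[ℝ] ℝ) :
    ∃ x : X, ∀ ℓ : StrongDual ℝ X, φ (StrongDual.toWeakDual ℓ) = ℓ x := by
  classical
  have hinj : Function.Injective (topDualPairing ℝ X) := by
    intro a b hab
    ext x
    have h := congrArg (fun m : X →ₗ[ℝ] ℝ => m x) hab
    simpa [topDualPairing_apply] using h
  have hemb := WeakBilin.isEmbedding (B := topDualPairing ℝ X) hinj
  set e : WeakDual ℝ X → X → ℝ := fun ℓ y => topDualPairing ℝ X ℓ y with he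
  have hnb : φ ⁻¹' Set.Ioo (-1 : ℝ) 1 ∈ nhds (0 : WeakDual ℝ X) := by
    apply φ.continuous.continuousAt.preimage_mem_nhds
    rw [map_zero]
    exact Ioo_mem_nhds (by norm_num) (by norm_num)
  erw [hemb.toIsInducing.nhds_eq_comap, Filter.mem_comap] at hnb
  obtain ⟨U, hU, hUsub⟩ := hnb
  have he0 : e 0 = fun _ => (0 : ℝ) := by
    funext y
    rfl
  change U ∈ nhds (fun _ => (0 : ℝ)) at hU
  rw [nhds_pi, Filter.mem_pi] at hU
  obtain ⟨I, hIfin, t, ht, htsub⟩ := hU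
  have hker : ∀ ℓ : StrongDual ℝ X, (∀ y ∈ I, ℓ y = 0) → φ (StrongDual.toWeakDual ℓ) = 0 := by
    intro ℓ hℓ
    by_contra hne
    set c : ℝ := (φ (StrongDual.toWeakDual ℓ))⁻¹ with hc
    have hmem : e (c • StrongDual.toWeakDual ℓ) ∈ I.pi t := by
      intro y hy
      have hy0 : e (c • StrongDual.toWeakDual ℓ) y = 0 := by
        have h1 : e (c • StrongDual.toWeakDual ℓ) y
            = c * topDualPairing ℝ X (StrongDual.toWeakDual ℓ) y := by
          rw [he]
          show topDualPairing ℝ X (c • StrongDual.toWeakDual ℓ) y = _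
          show (c • ℓ) y = c * ℓ y
          rw [ContinuousLinearMap.smul_apply, smul_eq_mul]
        rw [h1, show topDualPairing ℝ X (StrongDual.toWeakDual ℓ) y = ℓ y from rfl, hℓ y hy, mul_zero]
      rw [hy0]
      exact mem_of_mem_nhds (ht y)
    have hin := hUsub (htsub hmem)
    have : φ (c • StrongDual.toWeakDual ℓ) = 1 := by
      rw [map_smul, smul_eq_mul, hc, inv_mul_cancel₀ hne]
    replace hin : φ (c • StrongDual.toWeakDual ℓ) ∈ Set.Ioo (-1 : ℝ) 1 := hin; rw [this] at hin
    exact absurd hin.2 (lt_irrefl 1)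
  haveI : Finite I := hIfin.to_subtype
  set L : I → (StrongDual ℝ X →ₗ[ℝ] ℝ) := fun i => (topDualPairing ℝ X).flip (i : X) with hL
  set K : StrongDual ℝ X →ₗ[ℝ] ℝ :=
    (φ.toLinearMap).comp (StrongDual.toWeakDual (𝕜 := ℝ) (E := X)).toLinearMap with hK
  have hle : ⨅ i, LinearMap.ker (L i) ≤ LinearMap.ker K := by
    intro ℓ hℓ
    simp only [Submodule.mem_iInf, LinearMap.mem_ker] at hℓ ⊢
    have : ∀ y ∈ I, ℓ y = 0 := by
      intro y hy
      have := hℓ ⟨y, hy⟩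
      simpa [hL, topDualPairing_apply] using this
    exact hker ℓ this
  have hspan := mem_span_of_iInf_ker_le_ker (𝕜 := ℝ) hle
  haveI : Fintype I := hIfin.fintype
  obtain ⟨c, hc⟩ := (Submodule.mem_span_range_iff_exists_fun ℝ).1 hspan
  refine ⟨∑ i, c i • (i : X), fun ℓ => ?_⟩
  have hKℓ : K ℓ = φ (StrongDual.toWeakDual ℓ) := rfl
  have := LinearMap.congr_fun hc ℓ
  rw [hKℓ] at this
  rw [← this]
  simp [hL, topDualPairing_apply, map_sum, map_smul, smul_eq_mul]

/-- The half of the bipolar theorem we need : if `H` is weak-star closed and `ℓ` kills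
the pre-annihilator of `H`, then `ℓ ∈ H`. -/
lemma mem_of_isWeakStarClosed {H : Submodule ℝ (StrongDual ℝ X)} (hH : IsWeakStarClosed H)
    {ℓ : StrongDual ℝ X} (hℓ : ∀ x ∈ preAnn H, ℓ x = 0) : ℓ ∈ H := by
  haveI : LocallyConvexSpace ℝ (WeakDual ℝ X) :=
    WeakBilin.locallyConvexSpace (B := topDualPairing ℝ X)
  by_contra hmem
  have hS : IsClosed (StrongDual.toWeakDual '' (H : Set (StrongDual ℝ X))) := hH
  have hSeq : StrongDual.toWeakDual '' (H : Set (StrongDual ℝ X))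
      = ↑(H.map (StrongDual.toWeakDual (𝕜 := ℝ) (E := X) : StrongDual ℝ X →ₗ[ℝ] WeakDual ℝ X)) := by
    simp [Submodule.map_coe]
  have hconv : Convex ℝ (StrongDual.toWeakDual '' (H : Set (StrongDual ℝ X))) := by
    rw [hSeq]
    exact Submodule.convex _
  have hnot : StrongDual.toWeakDual ℓ ∉ StrongDual.toWeakDual '' (H : Set (StrongDual ℝ X)) := by
    rintro ⟨m, hm, hme⟩
    exact hmem (((StrongDual.toWeakDual (𝕜 := ℝ) (E := X)).injective hme) ▸ hm)
  obtain ⟨φ, u, hfu, hu⟩ := geometric_hahn_banach_closed_point hconv hS hnot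
  have hvan : ∀ m ∈ H, φ (StrongDual.toWeakDual m) = 0 := by
    intro m hm
    by_contra hne
    have h2 := hfu (((u + |u| + 1) / φ (StrongDual.toWeakDual m)) • StrongDual.toWeakDual m)
      ⟨((u + |u| + 1) / φ (StrongDual.toWeakDual m)) • m, H.smul_mem _ hm, map_smul _ _ _⟩
    rw [map_smul, smul_eq_mul, div_mul_cancel₀ _ hne] at h2
    have := abs_nonneg u
    linarith [neg_abs_le u]
  have hu0 : 0 < u := by
    have h0 := hfu 0 ⟨0, H.zero_mem, map_zero _⟩
    rwa [map_zero] at h0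
  obtain ⟨x, hx⟩ := exists_eval_of_continuous φ
  have hxV : x ∈ preAnn H := by
    intro m hm
    rw [← hx m]
    exact hvan m hm
  have h1 : ℓ x = 0 := hℓ x hxV
  rw [hx ℓ, h1] at hu
  linarith

/-- Finite-dimensional subspaces of the bidual contain the annihilator of their
pre-annihilator. -/
lemma mem_of_forall_preAnn {F : Submodule ℝ (StrongDual ℝ (StrongDual ℝ X))} [FiniteDimensional ℝ F]
    {g : StrongDual ℝ (StrongDual ℝ X)} (hg : ∀ ℓ ∈ preAnn F, g ℓ = 0) : g ∈ F := by
  classical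
  by_contra hgF
  set F' : Submodule ℝ (StrongDual ℝ (StrongDual ℝ X)) := F ⊔ Submodule.span ℝ {g} with hF'
  haveI : FiniteDimensional ℝ F' := inferInstance
  set R : StrongDual ℝ X →ₗ[ℝ] Module.Dual ℝ F' :=
    { toFun := fun ℓ =>
        { toFun := fun h => (h : StrongDual ℝ (StrongDual ℝ X)) ℓ
          map_add' := fun a b => by simp
          map_smul' := fun c a => by simp }
      map_add' := fun a b => by ext h; simp
      map_smul' := fun c a => by ext h; simp } with hR
  have hsep : Submodule.span ℝ (Set.range R) = ⊤ := by
    haveI : Module.IsReflexive ℝ F' := by haveI : Module.Free ℝ F' := Module.Free.of_divisionRing ℝ F'; exact Module.IsReflexive.of_finite_of_free ℝ F'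
    refine Submodule.span_eq_top_of_ne_zero (R := ℝ) (M := F') (s := Set.range R) ?_
    intro z hz
    have hz' : (z : StrongDual ℝ (StrongDual ℝ X)) ≠ 0 := fun h => hz (Subtype.ext h)
    have : ∃ ℓ : StrongDual ℝ X, (z : StrongDual ℝ (StrongDual ℝ X)) ℓ ≠ 0 := by
      by_contra hcon
      push_neg at hcon
      exact hz' (ContinuousLinearMap.ext fun ℓ => by simpa using hcon ℓ)
    obtain ⟨ℓ, hℓ⟩ := this
    exact ⟨R ℓ, ⟨ℓ, rfl⟩, hℓ⟩
  set p : Submodule ℝ F' := F.comap F'.subtype with hp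
  have hgmem : g ∈ F' := Submodule.mem_sup_right (Submodule.mem_span_singleton_self g)
  set g' : F' := ⟨g, hgmem⟩ with hg'
  have hg'p : g' ∉ p := by
    simpa [hp, Submodule.mem_comap] using hgF
  obtain ⟨ψ, hψg, hψp⟩ := Submodule.exists_dual_map_eq_bot_of_notMem (p := p) (x := g') hg'p inferInstance
  have hranR : LinearMap.range R = ⊤ := by
    apply top_unique
    rw [← hsep]
    exact Submodule.span_le.2 (Set.range_subset_iff.2 fun ℓ => ⟨ℓ, rfl⟩)
  obtain ⟨ℓ, rfl⟩ : ∃ ℓ, R ℓ = ψ := by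
    have : ψ ∈ LinearMap.range R := hranR ▸ Submodule.mem_top
    exact this
  have hℓF : ℓ ∈ preAnn F := by
    intro f hf
    have hf' : (⟨f, Submodule.mem_sup_left hf⟩ : F') ∈ p := hf
    have h2 : R ℓ ⟨f, Submodule.mem_sup_left hf⟩ ∈ p.map (R ℓ) := Submodule.mem_map_of_mem hf'
    rw [hψp] at h2
    simpa [hR] using h2
  have : R ℓ g' = 0 := by simpa [hR, hg'] using hg ℓ hℓF
  exact hψg this

/-- Fin-dim subspaces are complemented, and functionals on the dual vanishing on the
annihilator of a fin-dim subspace `V` come from `V`. -/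
lemma findim_key {V : Submodule ℝ X} [FiniteDimensional ℝ V] :
    (∃ Q : X →L[ℝ] X, Q.comp Q = Q ∧ LinearMap.range (Q : X →ₗ[ℝ] X) = V) ∧
    ∀ f : StrongDual ℝ (StrongDual ℝ X), (∀ ℓ : StrongDual ℝ X, (∀ x ∈ V, ℓ x = 0) → f ℓ = 0) →
      ∃ v ∈ V, inclusionInDoubleDual ℝ X v = f := by
  classical
  set n := Module.finrank ℝ V with hn
  set b : Module.Basis (Fin n) ℝ V := Module.finBasis ℝ V with hb
  have hcoord : ∀ i : Fin n, ∃ gi : X →L[ℝ] ℝ,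
      ∀ v : V, gi v = b.coord i v := by
    intro i
    obtain ⟨gi, hgi, _⟩ := exists_extension_norm_eq V
      (LinearMap.toContinuousLinearMap (b.coord i))
    exact ⟨gi, fun v => by simpa using hgi v⟩
  choose g hg using hcoord
  -- the projection
  set Q : X →L[ℝ] X := ∑ i, (g i).smulRight (b i : X) with hQ
  have hQapp : ∀ x : X, Q x = ∑ i, g i x • (b i : X) := by
    intro x
    simp [hQ, ContinuousLinearMap.sum_apply]
  have hQmem : ∀ x : X, Q x ∈ V := by
    intro x
    rw [hQapp]
    exact Submodule.sum_mem _ fun i _ => Submodule.smul_mem _ _ (b i).2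
  have hQfix : ∀ v : V, Q (v : X) = v := by
    intro v
    rw [hQapp]
    have : ∀ i, g i (v : X) • (b i : X) = ((b.repr v i • b i : V) : X) := by
      intro i
      rw [hg i v, Module.Basis.coord_apply]
      rfl
    rw [Finset.sum_congr rfl fun i _ => this i]
    rw [← Submodule.coe_sum]
    rw [b.sum_repr v]
  constructor
  · refine ⟨Q, ?_, ?_⟩
    · ext x
      exact hQfix ⟨Q x, hQmem x⟩
    · apply le_antisymm
      · rintro _ ⟨x, rfl⟩
        exact hQmem x
      · intro v hv
        exact ⟨v, hQfix ⟨v, hv⟩⟩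
  · intro f hf
    refine ⟨∑ i, f (g i) • (b i : X),
      Submodule.sum_mem _ fun i _ => Submodule.smul_mem _ _ (b i).2, ?_⟩
    ext ℓ
    have hm : ∀ x ∈ V, (ℓ - ∑ i, ℓ (b i : X) • g i) x = 0 := by
      intro x hx
      have h1 : (∑ i, ℓ (b i : X) • g i) x = ∑ i, ℓ (b i : X) * g i x := by
        simp [ContinuousLinearMap.sum_apply]
      have h2 : ∀ i, g i x = b.repr ⟨x, hx⟩ i := by
        intro i
        simpa [Module.Basis.coord_apply] using hg i ⟨x, hx⟩
      have h3 : ∑ i, ℓ (b i : X) * g i x = ℓ x := by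
        rw [Finset.sum_congr rfl fun i _ => by rw [h2 i]]
        have : ∑ i, ℓ (b i : X) * b.repr ⟨x, hx⟩ i
            = ℓ ((∑ i, b.repr ⟨x, hx⟩ i • b i : V) : X) := by
          rw [Submodule.coe_sum, map_sum]
          exact Finset.sum_congr rfl fun i _ => by
            rw [Submodule.coe_smul, map_smul, smul_eq_mul, mul_comm]
        rw [this, b.sum_repr ⟨x, hx⟩]
      simp [h1, h3]
    have hfm : f (ℓ - ∑ i, ℓ (b i : X) • g i) = 0 := hf _ hm
    have h4 : f ℓ = ∑ i, ℓ (b i : X) * f (g i) := by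
      have h5 : f (∑ i, ℓ (b i : X) • g i) = ∑ i, ℓ (b i : X) * f (g i) := by
        rw [map_sum]
        exact Finset.sum_congr rfl fun i _ => by rw [map_smul, smul_eq_mul]
      have h6 : f ℓ - f (∑ i, ℓ (b i : X) • g i) = 0 := by rw [← map_sub]; exact hfm
      rw [h5] at h6
      linarith
    rw [dual_def]
    rw [map_sum, h4]
    exact Finset.sum_congr rfl fun i _ => by rw [map_smul, smul_eq_mul, mul_comm]

end Aux

/-- If `F ⊆ X**` is finite-dimensional with weak-star closed pre-annihilator and
`V = (F₀)₀`, then `λ(F, X**) ≤ λ(V, X)`; indeed every projection of `X` onto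
`V` gives rise to a projection of `X**` onto `F` of the same norm. -/
theorem relProjConst_bidual_le (X : Type*) [NormedAddCommGroup X]
    [NormedSpace ℝ X] [CompleteSpace X]
    (F : Submodule ℝ (StrongDual ℝ (StrongDual ℝ X)))
    (hFfd : FiniteDimensional ℝ F)
    (hF₀ : IsWeakStarClosed (preAnn F)) :
    relProjConst (Y := StrongDual ℝ (StrongDual ℝ X)) F ≤ relProjConst (Y := X) (preAnn (preAnn F)) ∧
      ∀ Q : X →L[ℝ] X, Q.comp Q = Q → LinearMap.range (Q : X →ₗ[ℝ] X) = preAnn (preAnn F) →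
        ∃ P : StrongDual ℝ (StrongDual ℝ X) →L[ℝ] StrongDual ℝ (StrongDual ℝ X),
          P.comp P = P ∧ LinearMap.range (P : StrongDual ℝ (StrongDual ℝ X) →ₗ[ℝ] StrongDual ℝ (StrongDual ℝ X)) = F ∧ ‖P‖ = ‖Q‖ := by
  classical
  haveI := hFfd
  set V : Submodule ℝ X := preAnn (preAnn F) with hV
  have hiso : ∀ y : X, ‖inclusionInDoubleDual ℝ X y‖ = ‖y‖ := fun y =>
    (inclusionInDoubleDualLi ℝ (E := X)).norm_map y
  have hJmem : ∀ x ∈ V, inclusionInDoubleDual ℝ X x ∈ F := by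
    intro x hx
    apply mem_of_forall_preAnn
    intro ℓ hℓ
    rw [dual_def]
    exact hx ℓ hℓ
  haveI hVfd : FiniteDimensional ℝ V := by
    set T : V →ₗ[ℝ] F := LinearMap.codRestrict F
      (((inclusionInDoubleDual ℝ X).toLinearMap).comp V.subtype)
      (fun v => hJmem v v.2) with hT
    have hTinj : Function.Injective T := by
      intro a b hab
      apply Subtype.ext
      have h1 : inclusionInDoubleDual ℝ X (a : X) = inclusionInDoubleDual ℝ X (b : X) :=
        congrArg Subtype.val hab
      exact (inclusionInDoubleDualLi ℝ (E := X)).injective h1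
    exact FiniteDimensional.of_injective (V₂ := F) T hTinj
  obtain ⟨hQex, hrep⟩ := findim_key (V := V)
  have main : ∀ Q : X →L[ℝ] X, Q.comp Q = Q → LinearMap.range (Q : X →ₗ[ℝ] X) = V →
      ∃ P : StrongDual ℝ (StrongDual ℝ X) →L[ℝ] StrongDual ℝ (StrongDual ℝ X),
        P.comp P = P ∧ LinearMap.range (P : StrongDual ℝ (StrongDual ℝ X) →ₗ[ℝ] StrongDual ℝ (StrongDual ℝ X)) = F ∧ ‖P‖ = ‖Q‖ := by
    intro Q hQ2 hQr
    set D : StrongDual ℝ X →L[ℝ] StrongDual ℝ X := (ContinuousLinearMap.compL ℝ X X ℝ).flip Q with hD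
    have hDapp : ∀ ℓ : StrongDual ℝ X, D ℓ = ℓ.comp Q := fun ℓ => rfl
    set P : StrongDual ℝ (StrongDual ℝ X) →L[ℝ] StrongDual ℝ (StrongDual ℝ X) :=
      (ContinuousLinearMap.compL ℝ (StrongDual ℝ X) (StrongDual ℝ X) ℝ).flip D with hP
    have hPapp : ∀ (f : StrongDual ℝ (StrongDual ℝ X)) (ℓ : StrongDual ℝ X), P f ℓ = f (ℓ.comp Q) :=
      fun f ℓ => rfl
    have hPJ : ∀ x : X, P (inclusionInDoubleDual ℝ X x) = inclusionInDoubleDual ℝ X (Q x) := by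
      intro x
      ext ℓ
      rw [hPapp, dual_def, dual_def, ContinuousLinearMap.comp_apply]
    refine ⟨P, ?_, ?_, ?_⟩
    · ext f ℓ
      show P (P f) ℓ = P f ℓ
      rw [hPapp, hPapp, hPapp, ContinuousLinearMap.comp_assoc, hQ2]
    · apply le_antisymm
      · rintro _ ⟨f, rfl⟩
        apply mem_of_forall_preAnn
        intro ℓ hℓ
        have hc : ℓ.comp Q = 0 := by
          ext x
          have hQx : Q x ∈ V := hQr ▸ LinearMap.mem_range_self Q.toLinearMap x
          exact hQx ℓ hℓ
        rw [ContinuousLinearMap.coe_coe, hPapp, hc, map_zero]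
      · intro f hf
        have hfv : ∀ ℓ : StrongDual ℝ X, (∀ x ∈ V, ℓ x = 0) → f ℓ = 0 := by
          intro ℓ hℓ
          exact mem_of_isWeakStarClosed hF₀ hℓ f hf
        obtain ⟨v, hv, hJv⟩ := hrep f hfv
        refine ⟨inclusionInDoubleDual ℝ X v, ?_⟩
        have hQv : Q v = v := by
          obtain ⟨u, hu⟩ : v ∈ LinearMap.range (Q : X →ₗ[ℝ] X) := hQr ▸ hv
          rw [← hu, ContinuousLinearMap.coe_coe, ← ContinuousLinearMap.comp_apply, hQ2]
        rw [ContinuousLinearMap.coe_coe, hPJ, hQv, hJv]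
    · apply le_antisymm
      · apply ContinuousLinearMap.opNorm_le_bound _ (norm_nonneg Q)
        intro f
        have hDle : ‖D‖ ≤ ‖Q‖ := by
          apply ContinuousLinearMap.opNorm_le_bound _ (norm_nonneg Q)
          intro ℓ
          rw [hDapp, mul_comm]
          exact ContinuousLinearMap.opNorm_comp_le ℓ Q
        calc ‖P f‖ = ‖f.comp D‖ := rfl
          _ ≤ ‖f‖ * ‖D‖ := ContinuousLinearMap.opNorm_comp_le f D
          _ ≤ ‖f‖ * ‖Q‖ := mul_le_mul_of_nonneg_left hDle (norm_nonneg f)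
          _ = ‖Q‖ * ‖f‖ := mul_comm _ _
      · apply ContinuousLinearMap.opNorm_le_bound _ (norm_nonneg P)
        intro x
        calc ‖Q x‖ = ‖inclusionInDoubleDual ℝ X (Q x)‖ := (hiso _).symm
          _ = ‖P (inclusionInDoubleDual ℝ X x)‖ := by rw [hPJ]
          _ ≤ ‖P‖ * ‖inclusionInDoubleDual ℝ X x‖ := P.le_opNorm _
          _ = ‖P‖ * ‖x‖ := by rw [hiso]
  refine ⟨?_, main⟩
  obtain ⟨Q₀, hQ₀2, hQ₀r⟩ := hQex
  apply csInf_le_csInf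
  · refine ⟨0, ?_⟩
    rintro c ⟨P, _, _, hPc⟩
    exact hPc ▸ norm_nonneg P
  · exact ⟨‖Q₀‖, Q₀, hQ₀2, hQ₀r, rfl⟩
  · rintro c ⟨Q, hQ2, hQr, rfl⟩
    obtain ⟨P, h1, h2, h3⟩ := main Q hQ2 hQr
    exact ⟨P, h1, h2, h3⟩
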